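/- For a graph G with a perfect matching and maximum degree Δ, the minimum forcing number satisfies f(G) ≤ af(G) ≤ (Δ−1)·f(G), and the maximum forcing number satisfies F(G) ≤ Af(G) ≤ (Δ−1)·F(G). -/

import Mathlib

open SimpleGraph

variable {V : Type*}

/-- A closed walk is an `M`-alternating cycle: it is a cycle and its edges alternate
(cyclically) between `M` and the complement of `M`. -/
def SimpleGraph.IsAltCycle (G : SimpleGraph V) (M : Set (Sym2 V)) {v : V} (c : G.Walk v v) :
    Prop :=
  c.IsCycle ∧ List.Chain' (fun e f => (e ∈ M ↔ f ∉ M)) c.edges ∧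
    ∀ e f, c.edges.head? = some e → c.edges.getLast? = some f → (f ∈ M ↔ e ∉ M)

/-- `S` is a forcing set of the perfect matching `M`: `S ⊆ M` and `M` is the unique
perfect matching of `G` containing `S`. -/
def SimpleGraph.IsForcingSet (G : SimpleGraph V) (M : G.Subgraph) (S : Set (Sym2 V)) : Prop :=
  S ⊆ M.edgeSet ∧ ∀ N : G.Subgraph, N.IsPerfectMatching → S ⊆ N.edgeSet → N = M

/-- `S` is an anti-forcing set of the perfect matching `M`: `S` consists of edges of `G`
not in `M`, and `M` is the unique perfect matching of `G - S` (equivalently, the unique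
perfect matching of `G` whose edge set avoids `S`). -/
def SimpleGraph.IsAntiForcingSet (G : SimpleGraph V) (M : G.Subgraph) (S : Set (Sym2 V)) :
    Prop :=
  S ⊆ G.edgeSet \ M.edgeSet ∧
    ∀ N : G.Subgraph, N.IsPerfectMatching → Disjoint N.edgeSet S → N = M

/-- The forcing number `f(G,M)`. -/
noncomputable def SimpleGraph.forcingNum (G : SimpleGraph V) (M : G.Subgraph) : ℕ :=
  sInf {n | ∃ S : Set (Sym2 V), G.IsForcingSet M S ∧ S.ncard = n}

/-- The anti-forcing number `af(G,M)`. -/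
noncomputable def SimpleGraph.antiForcingNum (G : SimpleGraph V) (M : G.Subgraph) : ℕ :=
  sInf {n | ∃ S : Set (Sym2 V), G.IsAntiForcingSet M S ∧ S.ncard = n}

section Aux
variable {G : SimpleGraph V} [Finite V]

lemma pm_eq_of_edge_subset {M N : G.Subgraph}
    (hM : M.IsPerfectMatching) (hN : N.IsPerfectMatching)
    (h : M.edgeSet ⊆ N.edgeSet) : N = M := by
  ext u v
  · simp [hM.2 _, hN.2 _]
  · constructor
    · intro hadj
      obtain ⟨w, hw, huniq⟩ := hM.1 (hM.2 u)
      have : N.Adj u w := Subgraph.mem_edgeSet.mp (h (Subgraph.mem_edgeSet.mpr hw))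
      obtain ⟨w', hw', huniq'⟩ := hN.1 (hN.2 u)
      have h1 : w = w' := huniq' _ this
      have h2 : v = w' := huniq' _ hadj
      rw [h2, ← h1]; exact hw
    · intro hadj
      exact Subgraph.mem_edgeSet.mp (h (Subgraph.mem_edgeSet.mpr hadj))

lemma forcing_self {M : G.Subgraph} (hM : M.IsPerfectMatching) :
    G.IsForcingSet M M.edgeSet :=
  ⟨subset_rfl, fun N hN hsub => pm_eq_of_edge_subset hM hN hsub⟩

lemma antiforcing_compl {M : G.Subgraph} (hM : M.IsPerfectMatching) :
    G.IsAntiForcingSet M (G.edgeSet \ M.edgeSet) := by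
  refine ⟨subset_rfl, fun N hN hdis => ?_⟩
  apply (pm_eq_of_edge_subset hN hM ?_).symm
  intro e he
  by_contra hne
  exact hdis.le_bot ⟨he, N.edgeSet_subset he, hne⟩ |>.elim

lemma forcing_nonempty {M : G.Subgraph} (hM : M.IsPerfectMatching) :
    {n | ∃ S : Set (Sym2 V), G.IsForcingSet M S ∧ S.ncard = n}.Nonempty :=
  ⟨_, M.edgeSet, forcing_self hM, rfl⟩

lemma antiforcing_nonempty {M : G.Subgraph} (hM : M.IsPerfectMatching) :
    {n | ∃ S : Set (Sym2 V), G.IsAntiForcingSet M S ∧ S.ncard = n}.Nonempty :=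
  ⟨_, _, antiforcing_compl hM, rfl⟩

/-- f(G,M) ≤ af(G,M) -/
lemma forcingNum_le_antiForcingNum {M : G.Subgraph} (hM : M.IsPerfectMatching) :
    G.forcingNum M ≤ G.antiForcingNum M := by
  classical
  obtain ⟨S, hS, hcard⟩ := Nat.sInf_mem (antiforcing_nonempty hM)
  -- matching function
  have hm : ∀ v : V, ∃! w, M.Adj v w := fun v => hM.1 (hM.2 v)
  set m : V → V := fun v => (hm v).choose with hmdef
  have hmadj : ∀ v, M.Adj v (m v) := fun v => (hm v).choose_spec.1
  have hmuniq : ∀ v w, M.Adj v w → w = m v := fun v w h => (hm v).choose_spec.2 w h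
  set g : Sym2 V → Sym2 V := fun e => s(e.out.1, m e.out.1) with hgdef
  have hT : G.IsForcingSet M (g '' S) := by
    constructor
    · rintro _ ⟨e, _, rfl⟩
      exact Subgraph.mem_edgeSet.mpr (hmadj _)
    · intro N hN hsub
      apply hS.2 N hN
      rw [Set.disjoint_right]
      intro e heS heN
      have heGM : e ∈ G.edgeSet \ M.edgeSet := hS.1 heS
      have hout : e = s(e.out.1, e.out.2) := by
        rw [Sym2.mk, Prod.mk.eta, e.out_eq]
      have hNadj : N.Adj e.out.1 e.out.2 := by
        rw [hout] at heN; exact Subgraph.mem_edgeSet.mp heN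
      have hNadj' : N.Adj e.out.1 (m e.out.1) :=
        Subgraph.mem_edgeSet.mp (hsub ⟨e, heS, rfl⟩)
      obtain ⟨w, hw, huniq⟩ := hN.1 (hN.2 e.out.1)
      have : e.out.2 = m e.out.1 := by rw [huniq _ hNadj, huniq _ hNadj']
      have heM : e ∈ M.edgeSet := by
        rw [hout, this]; exact Subgraph.mem_edgeSet.mpr (hmadj _)
      exact heGM.2 heM
  calc G.forcingNum M ≤ (g '' S).ncard := Nat.sInf_le ⟨g '' S, hT, rfl⟩
    _ ≤ S.ncard := Set.ncard_image_le (Set.toFinite S)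
    _ = G.antiForcingNum M := hcard

lemma ncard_biUnion_le {α β : Type*} {s : Set α} (hs : s.Finite) {f : α → Set β} {k : ℕ} :
    (∀ a ∈ s, (f a).ncard ≤ k) → (⋃ a ∈ s, f a).ncard ≤ k * s.ncard := by
  classical
  refine Set.Finite.induction_on (motive := fun s _ => (∀ a ∈ s, (f a).ncard ≤ k) →
    (⋃ a ∈ s, f a).ncard ≤ k * s.ncard) s hs (by simp) ?_
  intro a s ha hs ih hf
  rw [Set.biUnion_insert]
  calc (f a ∪ ⋃ x ∈ s, f x).ncard ≤ (f a).ncard + (⋃ x ∈ s, f x).ncard :=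
        Set.ncard_union_le _ _
    _ ≤ k + k * s.ncard := add_le_add (hf a (Set.mem_insert a s))
        (ih fun b hb => hf b (Set.mem_insert_of_mem a hb))
    _ = k * (insert a s).ncard := by
        rw [Set.ncard_insert_of_notMem ha hs, mul_add, mul_one, add_comm]

lemma antiForcingNum_le_sub_mul [Fintype V] [DecidableRel G.Adj] {M : G.Subgraph}
    (hM : M.IsPerfectMatching) :
    G.antiForcingNum M ≤ (G.maxDegree - 1) * G.forcingNum M := by
  classical
  obtain ⟨S, hS, hcard⟩ := Nat.sInf_mem (forcing_nonempty hM)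
  set A : Sym2 V → Set (Sym2 V) := fun e => {f | f ∈ G.edgeSet ∧ e.out.1 ∈ f ∧ f ≠ e}
    with hAdef
  have hout : ∀ e : Sym2 V, e = s(e.out.1, e.out.2) := fun e => by
    rw [Sym2.mk, Prod.mk.eta, e.out_eq]
  have hfst : ∀ e : Sym2 V, e.out.1 ∈ e := fun e => by
    have := Sym2.mem_mk_left e.out.1 e.out.2
    rwa [← hout e] at this
  have hAsub : ∀ e ∈ S, A e ⊆ G.edgeSet \ M.edgeSet := by
    intro e heS f hf
    obtain ⟨hfG, hxf, hfe⟩ := hf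
    refine ⟨hfG, fun hfM => hfe ?_⟩
    obtain ⟨y, rfl⟩ := Sym2.mem_iff_exists.mp hxf
    have heM : M.Adj e.out.1 e.out.2 := by
      rw [← Subgraph.mem_edgeSet, ← hout e]; exact hS.1 heS
    obtain ⟨w, hw, huniq⟩ := hM.1 (hM.2 e.out.1)
    have h1 : y = w := huniq _ (Subgraph.mem_edgeSet.mp hfM)
    have h2 : e.out.2 = w := huniq _ heM
    rw [h1, ← h2, ← hout e]
  have hAcard : ∀ e ∈ S, (A e).ncard ≤ G.maxDegree - 1 := by
    intro e heS
    have heG : e ∈ G.edgeSet := M.edgeSet_subset (hS.1 heS)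
    have hsub : A e ⊆ G.incidenceSet e.out.1 \ {e} := by
      rintro f ⟨hfG, hxf, hfe⟩
      exact ⟨⟨hfG, hxf⟩, hfe⟩
    have heInc : e ∈ G.incidenceSet e.out.1 := ⟨heG, hfst e⟩
    have hIncCard : (G.incidenceSet e.out.1).ncard = G.degree e.out.1 := by
      rw [Set.ncard_eq_toFinset_card']
      simp only [Set.toFinset_card]
      exact G.card_incidenceSet_eq_degree _
    calc (A e).ncard ≤ (G.incidenceSet e.out.1 \ {e}).ncard :=
          Set.ncard_le_ncard hsub (Set.toFinite _)
      _ = (G.incidenceSet e.out.1).ncard - 1 :=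
          Set.ncard_diff_singleton_of_mem heInc
      _ ≤ G.maxDegree - 1 := by
          rw [hIncCard]; exact Nat.sub_le_sub_right (G.degree_le_maxDegree _) 1
  have hanti : G.IsAntiForcingSet M (⋃ e ∈ S, A e) := by
    constructor
    · intro f hf
      obtain ⟨e, heS, hfe⟩ := Set.mem_iUnion₂.mp hf
      exact hAsub e heS hfe
    · intro N hN hdis
      apply hS.2 N hN
      intro e heS
      obtain ⟨w, hw, huniq⟩ := hN.1 (hN.2 e.out.1)
      have hfN : s(e.out.1, w) ∈ N.edgeSet := Subgraph.mem_edgeSet.mpr hw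
      have hfA : s(e.out.1, w) ∉ A e := fun h =>
        hdis.le_bot ⟨hfN, Set.mem_iUnion₂.mpr ⟨e, heS, h⟩⟩
      have hfG : s(e.out.1, w) ∈ G.edgeSet := N.edgeSet_subset hfN
      by_cases hfe : s(e.out.1, w) = e
      · rw [← hfe]; exact hfN
      · exact absurd ⟨hfG, Sym2.mem_mk_left _ _, hfe⟩ hfA
  calc G.antiForcingNum M ≤ (⋃ e ∈ S, A e).ncard := Nat.sInf_le ⟨_, hanti, rfl⟩
    _ ≤ (G.maxDegree - 1) * S.ncard := ncard_biUnion_le (Set.toFinite S) hAcard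
    _ = (G.maxDegree - 1) * G.forcingNum M := by rw [hcard]; rfl

lemma forcingNum_le_card [Fintype V] {M : G.Subgraph} (hM : M.IsPerfectMatching) :
    G.forcingNum M ≤ (Set.univ : Set (Sym2 V)).ncard :=
  le_trans (Nat.sInf_le ⟨M.edgeSet, forcing_self hM, rfl⟩)
    (Set.ncard_le_ncard (Set.subset_univ _) (Set.toFinite _))

lemma antiForcingNum_le_card [Fintype V] {M : G.Subgraph} (hM : M.IsPerfectMatching) :
    G.antiForcingNum M ≤ (Set.univ : Set (Sym2 V)).ncard :=
  le_trans (Nat.sInf_le ⟨_, antiforcing_compl hM, rfl⟩)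
    (Set.ncard_le_ncard (Set.subset_univ _) (Set.toFinite _))

end Aux

/-- For a graph `G` with a perfect matching and maximum degree `Δ`, the minimum forcing
and anti-forcing numbers satisfy `f(G) ≤ af(G) ≤ (Δ−1)·f(G)`, and the maximum ones
satisfy `F(G) ≤ Af(G) ≤ (Δ−1)·F(G)`. -/
theorem min_max_forcing_antiforcing_bounds (G : SimpleGraph V) [Fintype V]
    [DecidableRel G.Adj] (hG : ∃ M : G.Subgraph, M.IsPerfectMatching) :
    (sInf {n | ∃ M : G.Subgraph, M.IsPerfectMatching ∧ G.forcingNum M = n} ≤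
        sInf {n | ∃ M : G.Subgraph, M.IsPerfectMatching ∧ G.antiForcingNum M = n} ∧
      sInf {n | ∃ M : G.Subgraph, M.IsPerfectMatching ∧ G.antiForcingNum M = n} ≤
        (G.maxDegree - 1) *
          sInf {n | ∃ M : G.Subgraph, M.IsPerfectMatching ∧ G.forcingNum M = n}) ∧
    (sSup {n | ∃ M : G.Subgraph, M.IsPerfectMatching ∧ G.forcingNum M = n} ≤
        sSup {n | ∃ M : G.Subgraph, M.IsPerfectMatching ∧ G.antiForcingNum M = n} ∧
      sSup {n | ∃ M : G.Subgraph, M.IsPerfectMatching ∧ G.antiForcingNum M = n} ≤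
        (G.maxDegree - 1) *
          sSup {n | ∃ M : G.Subgraph, M.IsPerfectMatching ∧ G.forcingNum M = n}) := by
  obtain ⟨M₀, hM₀⟩ := hG
  set F := {n | ∃ M : G.Subgraph, M.IsPerfectMatching ∧ G.forcingNum M = n} with hF
  set AF := {n | ∃ M : G.Subgraph, M.IsPerfectMatching ∧ G.antiForcingNum M = n} with hAF
  have hFne : F.Nonempty := ⟨_, M₀, hM₀, rfl⟩
  have hAFne : AF.Nonempty := ⟨_, M₀, hM₀, rfl⟩
  have hFbdd : BddAbove F := by
    refine ⟨(Set.univ : Set (Sym2 V)).ncard, ?_⟩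
    rintro n ⟨M, hM, rfl⟩
    exact forcingNum_le_card hM
  have hAFbdd : BddAbove AF := by
    refine ⟨(Set.univ : Set (Sym2 V)).ncard, ?_⟩
    rintro n ⟨M, hM, rfl⟩
    exact antiForcingNum_le_card hM
  refine ⟨⟨?_, ?_⟩, ?_, ?_⟩
  · obtain ⟨M, hM, hMn⟩ := Nat.sInf_mem hAFne
    calc sInf F ≤ G.forcingNum M := Nat.sInf_le ⟨M, hM, rfl⟩
      _ ≤ G.antiForcingNum M := forcingNum_le_antiForcingNum hM
      _ = sInf AF := hMn
  · obtain ⟨M, hM, hMn⟩ := Nat.sInf_mem hFne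
    calc sInf AF ≤ G.antiForcingNum M := Nat.sInf_le ⟨M, hM, rfl⟩
      _ ≤ (G.maxDegree - 1) * G.forcingNum M := antiForcingNum_le_sub_mul hM
      _ = (G.maxDegree - 1) * sInf F := by rw [hMn]
  · obtain ⟨M, hM, hMn⟩ := Nat.sSup_mem hFne hFbdd
    calc sSup F = G.forcingNum M := hMn.symm
      _ ≤ G.antiForcingNum M := forcingNum_le_antiForcingNum hM
      _ ≤ sSup AF := le_csSup hAFbdd ⟨M, hM, rfl⟩
  · obtain ⟨M, hM, hMn⟩ := Nat.sSup_mem hAFne hAFbdd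
    calc sSup AF = G.antiForcingNum M := hMn.symm
      _ ≤ (G.maxDegree - 1) * G.forcingNum M := antiForcingNum_le_sub_mul hM
      _ ≤ (G.maxDegree - 1) * sSup F :=
          Nat.mul_le_mul_left _ (le_csSup hFbdd ⟨M, hM, rfl⟩)
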